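/- Let Q be an acyclic cluster quiver with n vertices. Then every admissible numbering of the vertices of Q by sources is a maximal green sequence for Q. In particular green(Q) ≠ ∅ and ℓ_min(Q) = n. -/

import Mathlib

/-!
Common framework: a cluster quiver `Q` with vertex set `{1,…,n}` is encoded by its
skew-symmetric adjacency matrix `B : Fin n → Fin n → ℤ`.  Extended (framed-type)
matrices are `Fin n → (Fin n ⊕ Fin n) → ℤ`, the `Sum.inr` columns being the frozen ones.
-/

namespace GreenSeq

variable {n : ℕ}

/-- The framed quiver `Q̂ = [B | Iₙ]`. -/
def framedM (B : Fin n → Fin n → ℤ) : Fin n → (Fin n ⊕ Fin n) → ℤ :=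
  fun i => Sum.elim (B i) (fun j => if i = j then 1 else 0)

/-- The coframed quiver `Q̌ = [B | −Iₙ]`. -/
def coframedM (B : Fin n → Fin n → ℤ) : Fin n → (Fin n ⊕ Fin n) → ℤ :=
  fun i => Sum.elim (B i) (fun j => if i = j then -1 else 0)

/-- Mutation of an `n × 2n` matrix at a non-frozen index `k`. -/
def mutE (R : Fin n → (Fin n ⊕ Fin n) → ℤ) (k : Fin n) : Fin n → (Fin n ⊕ Fin n) → ℤ :=
  fun i j =>
    if i = k ∨ j = Sum.inl k then -R i j
    else R i j + max (R i (Sum.inl k)) 0 * max (R k j) 0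
               - min (R i (Sum.inl k)) 0 * min (R k j) 0

/-- Iterated mutation along a list of indices (first element mutated first). -/
def mutListE (R : Fin n → (Fin n ⊕ Fin n) → ℤ) (l : List (Fin n)) :
    Fin n → (Fin n ⊕ Fin n) → ℤ :=
  l.foldl mutE R

/-- `Mut(Q̂)`: all matrices obtained from the framed quiver by finite sequences of
mutations. -/
def MutSet (B : Fin n → Fin n → ℤ) : Set (Fin n → (Fin n ⊕ Fin n) → ℤ) :=
  {R | ∃ l : List (Fin n), R = mutListE (framedM B) l}

/-- A vertex `i` is green in `R` if the `i`-th row of the c-matrix is nonnegative. -/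
def IsGreen (R : Fin n → (Fin n ⊕ Fin n) → ℤ) (i : Fin n) : Prop :=
  ∀ j : Fin n, 0 ≤ R i (Sum.inr j)

/-- A vertex `i` is red in `R` if the `i`-th row of the c-matrix is nonpositive. -/
def IsRed (R : Fin n → (Fin n ⊕ Fin n) → ℤ) (i : Fin n) : Prop :=
  ∀ j : Fin n, R i (Sum.inr j) ≤ 0

/-- A green sequence starting from the extended matrix `R`. -/
def IsGreenSeq : (Fin n → (Fin n ⊕ Fin n) → ℤ) → List (Fin n) → Prop
  | _, [] => True
  | R, k :: l => IsGreen R k ∧ IsGreenSeq (mutE R k) l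

/-- A maximal green sequence for the quiver with adjacency matrix `B`. -/
def IsMaxGreenSeq (B : Fin n → Fin n → ℤ) (l : List (Fin n)) : Prop :=
  IsGreenSeq (framedM B) l ∧ ∀ i : Fin n, IsRed (mutListE (framedM B) l) i

/-- Isomorphism of ice quivers: a permutation of the non-frozen vertices carrying `R`
to `R'` and fixing the frozen columns. -/
def IceIso (R R' : Fin n → (Fin n ⊕ Fin n) → ℤ) : Prop :=
  ∃ σ : Equiv.Perm (Fin n),
    (∀ i j : Fin n, R' (σ i) (Sum.inl (σ j)) = R i (Sum.inl j)) ∧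
    (∀ i j : Fin n, R' (σ i) (Sum.inr j) = R i (Sum.inr j))

/-- Mutation of a square exchange matrix at index `k`. -/
def mutSq (B : Fin n → Fin n → ℤ) (k : Fin n) : Fin n → Fin n → ℤ :=
  fun i j =>
    if i = k ∨ j = k then -B i j
    else B i j + max (B i k) 0 * max (B k j) 0 - min (B i k) 0 * min (B k j) 0

/-- Skew-symmetry of the adjacency matrix (the encoding of a cluster quiver). -/
def IsSkew (B : Fin n → Fin n → ℤ) : Prop := ∀ i j : Fin n, B j i = -B i j

/-- A source of the quiver with adjacency matrix `B`. -/
def IsSource (B : Fin n → Fin n → ℤ) (i : Fin n) : Prop := ∀ j : Fin n, 0 ≤ B i j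

/-- `IsSourceSeq B s`: each element of `s` is a source at the time it is mutated. -/
def IsSourceSeq : (Fin n → Fin n → ℤ) → List (Fin n) → Prop
  | _, [] => True
  | B, k :: l => IsSource B k ∧ IsSourceSeq (mutSq B k) l

/-- Acyclicity: some renumbering of the vertices makes `B` nonnegative above the
diagonal. -/
def IsAcyclic (B : Fin n → Fin n → ℤ) : Prop :=
  ∃ σ : Equiv.Perm (Fin n), ∀ i j : Fin n, σ i < σ j → 0 ≤ B i j

/-- Connectivity of the underlying unoriented graph. -/
def IsConnectedQuiver (B : Fin n → Fin n → ℤ) : Prop :=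
  (SimpleGraph.fromRel (fun i j => B i j ≠ 0)).Connected

/-- The Tits form `q(d) = Σ dᵢ² − Σ_{arrows i→j} dᵢ dⱼ` of an acyclic quiver, where the
number of arrows `i → j` is `max (B i j) 0`. -/
def TitsForm (B : Fin n → Fin n → ℤ) (d : Fin n → ℤ) : ℤ :=
  (∑ i, d i ^ 2) - ∑ i, ∑ j, max (B i j) 0 * (d i * d j)

/-- A Dynkin quiver: connected, acyclic, with positive definite Tits form. -/
def IsDynkin (B : Fin n → Fin n → ℤ) : Prop :=
  IsConnectedQuiver B ∧ IsAcyclic B ∧ ∀ d : Fin n → ℤ, d ≠ 0 → 0 < TitsForm B d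

/-- Finite cluster type: some sequence of mutations transforms `B` into the adjacency
matrix of a Dynkin quiver. -/
def FiniteClusterType (B : Fin n → Fin n → ℤ) : Prop :=
  ∃ l : List (Fin n), IsDynkin (l.foldl mutSq B)

/-- Auxiliary: extended matrix `[B | diag s]`. -/
def ext (B : Fin n → Fin n → ℤ) (s : Fin n → ℤ) : Fin n → (Fin n ⊕ Fin n) → ℤ :=
  fun i => Sum.elim (B i) (fun j => if i = j then s i else 0)

lemma mutSq_skew {B : Fin n → Fin n → ℤ} (hB : IsSkew B) (k : Fin n) :
    IsSkew (mutSq B k) := by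
  intro i j
  unfold mutSq
  by_cases h : i = k ∨ j = k
  · rw [if_pos (Or.symm h), if_pos h, hB]
  · rw [if_neg (fun hc => h (Or.symm hc)), if_neg h]
    rw [hB i j, hB k j, hB i k]
    have m1 : max (-B k j) 0 = -(min (B k j) 0) := by omega
    have m2 : max (-B i k) 0 = -(min (B i k) 0) := by omega
    have m3 : min (-B k j) 0 = -(max (B k j) 0) := by omega
    have m4 : min (-B i k) 0 = -(max (B i k) 0) := by omega
    rw [m1, m2, m3, m4]
    ring

lemma mutE_ext {B : Fin n → Fin n → ℤ} (hB : IsSkew B) {k : Fin n} (hk : IsSource B k)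
    (s : Fin n → ℤ) (hsk : s k = 1) :
    mutE (ext B s) k = ext (mutSq B k) (fun i => if i = k then -1 else s i) := by
  funext i j
  have hik : B i k ≤ 0 := by have h1 := hB k i; have h2 := hk i; omega
  cases j with
  | inl j =>
      simp only [mutE, mutSq, ext, Sum.elim_inl, Sum.inl.injEq]
  | inr j =>
      by_cases hikk : i = k
      · subst hikk
        by_cases hj : i = j
        · subst hj; simp [mutE, ext, hsk]
        · simp [mutE, ext, hj]
      · simp only [mutE, ext, Sum.elim_inl, Sum.elim_inr]
        rw [if_neg (by simp [hikk])]
        have h1 : max (B i k) 0 = 0 := by omega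
        have h2 : min (if k = j then s k else 0) 0 = 0 := by
          by_cases hj : k = j
          · subst hj; simp [hsk]
          · simp [hj]
        rw [h1, h2]
        simp [hikk]

lemma green_ext : ∀ (l : List (Fin n)) (B : Fin n → Fin n → ℤ) (s : Fin n → ℤ),
    IsSkew B → IsSourceSeq B l → l.Nodup → (∀ k ∈ l, s k = 1) →
    IsGreenSeq (ext B s) l ∧
      mutListE (ext B s) l = ext (l.foldl mutSq B) (fun i => if i ∈ l then -1 else s i) := by
  intro l
  induction l with
  | nil =>
      intro B s _ _ _ _
      exact ⟨trivial, by funext i j; simp [mutListE, ext]⟩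
  | cons k t ih =>
      intro B s hB hss hnd hs1
      obtain ⟨hsrc, hss'⟩ := hss
      have hsk : s k = 1 := hs1 k (by simp)
      have hstep := mutE_ext hB hsrc s hsk
      have hknt : k ∉ t := (List.nodup_cons.mp hnd).1
      have hnd' : t.Nodup := (List.nodup_cons.mp hnd).2
      have ih' := ih (mutSq B k) (fun i => if i = k then -1 else s i)
        (mutSq_skew hB k) hss' hnd'
        (by
          intro k' hk'
          have hne : k' ≠ k := fun h => hknt (h ▸ hk')
          simp [hne, hs1 k' (List.mem_cons_of_mem _ hk')])
      constructor
      · refine ⟨?_, ?_⟩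
        · intro j
          simp only [ext, Sum.elim_inr]
          by_cases hj : k = j
          · subst hj; simp [hsk]
          · simp [hj]
        · rw [hstep]; exact ih'.1
      · show mutListE (mutE (ext B s) k) t = _
        rw [hstep, ih'.2]
        funext i j
        have hsgn : (if i ∈ t then (-1:ℤ) else if i = k then -1 else s i)
            = (if i ∈ k :: t then -1 else s i) := by
          by_cases h1 : i ∈ t <;> by_cases h2 : i = k <;> simp [h1, h2]
        cases j with
        | inl j => simp [ext]
        | inr j => simp only [ext, Sum.elim_inr, hsgn]

lemma part1 {B : Fin n → Fin n → ℤ} (hB : IsSkew B) (s : List (Fin n))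
    (hp : s.Perm (List.finRange n)) (hss : IsSourceSeq B s) : IsMaxGreenSeq B s := by
  have hframed : framedM B = ext B (fun _ => 1) := rfl
  have hnd : s.Nodup := hp.nodup_iff.mpr (List.nodup_finRange n)
  obtain ⟨hg, he⟩ := green_ext s B (fun _ => 1) hB hss hnd (fun _ _ => rfl)
  refine ⟨by rw [hframed]; exact hg, ?_⟩
  intro i j
  rw [hframed, he]
  have hmem : i ∈ s := hp.mem_iff.mpr (List.mem_finRange i)
  simp only [ext, Sum.elim_inr, hmem, if_pos]
  by_cases hj : i = j <;> simp [hj]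

lemma sourceSeq_aux {B : Fin n → Fin n → ℤ} (hB : IsSkew B) (σ : Equiv.Perm (Fin n))
    (hσ : ∀ i j, σ i < σ j → 0 ≤ B i j) :
    ∀ (t : List (Fin n)) (C : Fin n → Fin n → ℤ),
      t.Pairwise (fun a b => σ a < σ b) →
      (∀ i ∈ t, ∀ j ∈ t, C i j = B i j) →
      (∀ i ∈ t, ∀ j, j ∉ t → C i j = -B i j) →
      (∀ i ∈ t, ∀ j, j ∉ t → σ j < σ i) →
      IsSourceSeq C t := by
  intro t
  induction t with
  | nil => intro C _ _ _ _; trivial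
  | cons h t' ih =>
      intro C hpw ha hb hc
      have hpw' := (List.pairwise_cons.mp hpw).2
      have hlt : ∀ i ∈ t', σ h < σ i := (List.pairwise_cons.mp hpw).1
      have hmem : ∀ i ∈ t', i ≠ h := fun i hi he => lt_irrefl _ (he ▸ hlt i hi)
      have hsrc : IsSource C h := by
        intro j
        by_cases hj : j ∈ h :: t'
        · rw [ha h (by simp) j hj]
          rcases List.mem_cons.mp hj with he | hj'
          · rw [he]; have := hB h h; omega
          · exact hσ h j (hlt j hj')
        · rw [hb h (by simp) j hj]
          have h1 : 0 ≤ B j h := hσ j h (hc h (by simp) j hj)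
          have h2 := hB h j
          omega
      have hCih : ∀ i ∈ t', C i h ≤ 0 := by
        intro i hi
        rw [ha i (by simp [hi]) h (by simp)]
        have h1 : 0 ≤ B h i := hσ h i (hlt i hi)
        have h2 := hB i h
        omega
      refine ⟨hsrc, ?_⟩
      apply ih (mutSq C h) hpw'
      · intro i hi j hj
        have hih : i ≠ h := hmem i hi
        have hjh : j ≠ h := hmem j hj
        simp only [mutSq, if_neg (by tauto : ¬(i = h ∨ j = h))]
        have h1 : max (C i h) 0 = 0 := by have := hCih i hi; omega
        have h2 : min (C h j) 0 = 0 := by have := hsrc j; omega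
        rw [h1, h2, ha i (by simp [hi]) j (by simp [hj])]
        ring
      · intro i hi j hj
        have hih : i ≠ h := hmem i hi
        by_cases hjh : j = h
        · rw [hjh]
          have h0 : mutSq C h i h = -C i h := by simp [mutSq]
          rw [h0, ha i (by simp [hi]) h (by simp)]
        · have hjnt : j ∉ h :: t' := by simp [hjh, hj]
          simp only [mutSq, if_neg (by tauto : ¬(i = h ∨ j = h))]
          have h1 : max (C i h) 0 = 0 := by have := hCih i hi; omega
          have h2 : min (C h j) 0 = 0 := by have := hsrc j; omega
          rw [h1, h2, hb i (by simp [hi]) j hjnt]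
          ring
      · intro i hi j hj
        by_cases hjh : j = h
        · subst hjh; exact hlt i hi
        · exact hc i (by simp [hi]) j (by simp [hjh, hj])

lemma sourceSeq_exists {B : Fin n → Fin n → ℤ} (hB : IsSkew B) (hacyc : IsAcyclic B) :
    ∃ s : List (Fin n), s.Perm (List.finRange n) ∧ IsSourceSeq B s ∧
      s.length = n := by
  obtain ⟨σ, hσ⟩ := hacyc
  refine ⟨(List.finRange n).map σ.symm, ?_, ?_, by simp⟩
  · apply List.perm_of_nodup_nodup_toFinset_eq
    · exact (List.nodup_finRange n).map σ.symm.injective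
    · exact List.nodup_finRange n
    · ext x
      simp only [List.mem_toFinset, List.mem_map, List.mem_finRange, true_and]
      exact ⟨fun _ => trivial, fun _ => ⟨σ x, σ.symm_apply_apply x⟩⟩
  · have hall : ∀ j : Fin n, j ∈ (List.finRange n).map σ.symm := fun j =>
      List.mem_map.mpr ⟨σ j, List.mem_finRange _, σ.symm_apply_apply j⟩
    apply sourceSeq_aux hB σ hσ
    · rw [List.pairwise_map]
      have := List.pairwise_lt_finRange n
      refine this.imp ?_
      intro a b hab
      simpa using hab
    · intro i _ j _; rfl
    · intro i _ j hj; exact absurd (hall j) hj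
    · intro i _ j hj; exact absurd (hall j) hj

lemma green_mono : ∀ (l : List (Fin n)) (R : Fin n → (Fin n ⊕ Fin n) → ℤ),
    IsGreenSeq R l → ∀ i, i ∉ l → ∀ j,
      R i (Sum.inr j) ≤ mutListE R l i (Sum.inr j) := by
  intro l
  induction l with
  | nil => intro R _ i _ j; exact le_refl _
  | cons k t ih =>
      intro R hg i hi j
      obtain ⟨hgk, hgt⟩ := hg
      have hik : i ≠ k := by simp only [List.mem_cons, not_or] at hi; exact hi.1
      have hit : i ∉ t := by simp only [List.mem_cons, not_or] at hi; exact hi.2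
      have h1 : R i (Sum.inr j) ≤ mutE R k i (Sum.inr j) := by
        simp only [mutE,
          if_neg (by simp [hik] : ¬(i = k ∨ (Sum.inr j : Fin n ⊕ Fin n) = Sum.inl k))]
        have hg1 : 0 ≤ R k (Sum.inr j) := hgk j
        have h2 : min (R k (Sum.inr j)) 0 = 0 := by omega
        rw [h2]
        have h3 : 0 ≤ max (R i (Sum.inl k)) 0 * max (R k (Sum.inr j)) 0 :=
          mul_nonneg (le_max_right _ _) (le_max_right _ _)
        omega
      have h4 : mutE R k i (Sum.inr j) ≤ mutListE (mutE R k) t i (Sum.inr j) :=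
        ih (mutE R k) hgt i hit j
      exact le_trans h1 h4

lemma mgs_length_ge {B : Fin n → Fin n → ℤ} (l : List (Fin n))
    (hl : IsMaxGreenSeq B l) : n ≤ l.length := by
  have hall : ∀ i : Fin n, i ∈ l := by
    intro i
    by_contra hi
    have h1 := green_mono l (framedM B) hl.1 i hi i
    have h2 := hl.2 i i
    have h3 : framedM B i (Sum.inr i) = 1 := by simp [framedM]
    omega
  have hsub : (List.finRange n) ⊆ l := fun i _ => hall i
  calc n = (List.finRange n).length := List.length_finRange.symm
    _ ≤ l.length := ((List.nodup_finRange n).subperm hsub).length_le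

/-- for an acyclic cluster quiver, every admissible numbering of the
vertices by sources is a maximal green sequence; in particular `green(Q) ≠ ∅` and
`ℓ_min(Q) = n`. -/
theorem acyclic_admissible_source_numbering_is_mgs (n : ℕ) (B : Fin n → Fin n → ℤ)
    (hskew : IsSkew B) (hacyc : IsAcyclic B) :
    (∀ s : List (Fin n), s.Perm (List.finRange n) → IsSourceSeq B s →
        IsMaxGreenSeq B s) ∧
    (∃ s : List (Fin n), IsMaxGreenSeq B s) ∧
    IsLeast {l : ℕ | ∃ s : List (Fin n), IsMaxGreenSeq B s ∧ s.length = l} n := by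
  obtain ⟨s₀, hp₀, hss₀, hlen₀⟩ := sourceSeq_exists hskew hacyc
  have hmgs₀ : IsMaxGreenSeq B s₀ := part1 hskew s₀ hp₀ hss₀
  refine ⟨fun s hp hss => part1 hskew s hp hss, ⟨s₀, hmgs₀⟩, ⟨s₀, hmgs₀, hlen₀⟩, ?_⟩
  rintro m ⟨s, hs, rfl⟩
  exact mgs_length_ge s hs

end GreenSeq
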